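/- Let L₁ and L₂ be connected finite graphs, each with two distinguished vertices, say (a₁, a₂) in L₁ and (b₁, b₂) in L₂. Let L be the graph obtained by identifying a₁ with b₁ and a₂ with b₂ (disjoint union of edge sets, vertices identified pairwise). Then F₂(L) = F₂(L₁) · F₂(L₂), where F₂ denotes the number of spanning 2-forests separating the two distinguished vertices of each graph. -/

import Mathlib

structure Multigraph where
  V : Type
  E : Type
  [fintypeV : Fintype V]
  [fintypeE : Fintype E]
  [decEqV : DecidableEq V]
  ends : E → Sym2 V

attribute [instance] Multigraph.fintypeV Multigraph.fintypeE Multigraph.decEqV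

namespace Multigraph

variable (G : Multigraph)

/-- Reachability in the spanning subgraph using only the edges in `S`. -/
def Reach (S : Set G.E) : G.V → G.V → Prop :=
  Relation.ReflTransGen (fun x y => ∃ e ∈ S, G.ends e = s(x, y))

/-- The multigraph is connected. -/
def Connected : Prop := ∀ x y : G.V, G.Reach Set.univ x y

/-- The edge set `S` is acyclic: every edge of `S` is a bridge of `S`. -/
def IsForest (S : Finset G.E) : Prop :=
  ∀ e ∈ S, ∀ x y : G.V, G.ends e = s(x, y) → ¬ G.Reach ((↑S : Set G.E) \ {e}) x y

/-- `S` is the edge set of a spanning tree. -/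
def IsSpanningTree (S : Finset G.E) : Prop :=
  G.IsForest S ∧ ∀ x y : G.V, G.Reach ↑S x y

/-- `S` is the edge set of a spanning 2-forest consisting of two trees, one
containing `u`, the other containing `v`, whose vertex sets partition the vertices. -/
def IsTwoForest (u v : G.V) (S : Finset G.E) : Prop :=
  G.IsForest S ∧ ¬ G.Reach ↑S u v ∧ ∀ x : G.V, G.Reach ↑S u x ∨ G.Reach ↑S v x

/-- The number of spanning trees. -/
noncomputable def treeCount : ℕ :=
  Nat.card {S : Finset G.E // G.IsSpanningTree S}

/-- The number of spanning 2-forests separating `u` and `v`. -/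
noncomputable def twoForestCount (u v : G.V) : ℕ :=
  Nat.card {S : Finset G.E // G.IsTwoForest u v S}

end Multigraph

/-- The graph obtained by gluing `G` and `H` along the identifications `a₁ = b₁` and
`a₂ = b₂`: vertex sets are joined disjointly modulo the two identifications, edge sets
are joined disjointly (parallel edges may arise and are counted as distinct). -/
def glue2 (G H : Multigraph) (a₁ a₂ : G.V) (b₁ b₂ : H.V) : Multigraph where
  V := {x : G.V // x ≠ a₁ ∧ x ≠ a₂} ⊕ H.V
  E := G.E ⊕ H.E
  ends := fun e =>
    match e with
    | .inl e => (G.ends e).map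
        (fun x =>
          if h₁ : x = a₁ then Sum.inr b₁
          else if h₂ : x = a₂ then Sum.inr b₂
          else Sum.inl ⟨x, h₁, h₂⟩)
    | .inr e => (H.ends e).map Sum.inr

namespace Multigraph

lemma gExists_pair {α : Type*} (z : Sym2 α) : ∃ x y, z = s(x, y) := by
  induction z using Sym2.ind with
  | _ x y => exact ⟨x, y, rfl⟩

lemma reach_symm (G : Multigraph) (S : Set G.E) {x y : G.V} (h : G.Reach S x y) :
    G.Reach S y x :=
  (@Relation.ReflTransGen.stdSymm _ _
    ⟨fun u v ⟨e, he, hz⟩ => ⟨e, he, by rw [hz, Sym2.eq_swap]⟩⟩).symm _ _ h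

lemma reach_single (G : Multigraph) {S : Set G.E} {e : G.E} {x y : G.V} (he : e ∈ S)
    (h : G.ends e = s(x, y)) : G.Reach S x y :=
  Relation.ReflTransGen.single ⟨e, he, h⟩

lemma reach_hom {G H : Multigraph} (f : G.V → H.V) {S : Set G.E} {T : Set H.E}
    (hf : ∀ x y : G.V, (∃ e ∈ S, G.ends e = s(x, y)) → H.Reach T (f x) (f y))
    {x y : G.V} (h : G.Reach S x y) : H.Reach T (f x) (f y) := by
  induction h with
  | refl => exact Relation.ReflTransGen.refl
  | tail _ hstep ih => exact ih.trans (hf _ _ hstep)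

section Glue

variable (L₁ L₂ : Multigraph) (a₁ a₂ : L₁.V) (b₁ b₂ : L₂.V)

/-- The canonical map from `L₁.V` into the glued graph. -/
def gIota (x : L₁.V) : (glue2 L₁ L₂ a₁ a₂ b₁ b₂).V :=
  if h₁ : x = a₁ then Sum.inr b₁ else if h₂ : x = a₂ then Sum.inr b₂
  else Sum.inl ⟨x, h₁, h₂⟩

local notation "GG" => glue2 L₁ L₂ a₁ a₂ b₁ b₂
local notation "ι'" => gIota L₁ L₂ a₁ a₂ b₁ b₂

lemma gEnds_inl (e : L₁.E) : (GG).ends (Sum.inl e) = (L₁.ends e).map ι' := rfl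

lemma gEnds_inr (e : L₂.E) : (GG).ends (Sum.inr e) = (L₂.ends e).map Sum.inr := rfl

lemma iota_a1 : ι' a₁ = Sum.inr b₁ := dif_pos rfl

lemma iota_a2 (hne : a₂ ≠ a₁) : ι' a₂ = Sum.inr b₂ := by
  unfold gIota; exact (dif_neg hne).trans (dif_pos rfl)

lemma iota_other (u : L₁.V) (h₁ : u ≠ a₁) (h₂ : u ≠ a₂) :
    ι' u = Sum.inl ⟨u, h₁, h₂⟩ := by
  unfold gIota; exact (dif_neg h₁).trans (dif_neg h₂)

open Classical in
/-- Projection from the glued graph to `L₁`, folding the `L₂` part onto `a₁` or `a₂`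
according to reachability (w.r.t. edge set `S`) from the glue vertex `inr b₁`. -/
noncomputable def gProj1 (S : Set (glue2 L₁ L₂ a₁ a₂ b₁ b₂).E) :
    (glue2 L₁ L₂ a₁ a₂ b₁ b₂).V → L₁.V
  | .inl x => x.1
  | .inr y =>
      if (glue2 L₁ L₂ a₁ a₂ b₁ b₂).Reach S (Sum.inr b₁) (Sum.inr y) then a₁ else a₂

open Classical in
/-- Projection from the glued graph to `L₂`, folding the `L₁` part onto `b₁` or `b₂`. -/
noncomputable def gProj2 (S : Set (glue2 L₁ L₂ a₁ a₂ b₁ b₂).E) :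
    (glue2 L₁ L₂ a₁ a₂ b₁ b₂).V → L₂.V
  | .inl x =>
      if (glue2 L₁ L₂ a₁ a₂ b₁ b₂).Reach S (Sum.inr b₁) (Sum.inl x) then b₁ else b₂
  | .inr y => y

local notation "π₁" => gProj1 L₁ L₂ a₁ a₂ b₁ b₂
local notation "π₂" => gProj2 L₁ L₂ a₁ a₂ b₁ b₂

open Classical in
lemma reach_if_congr {α : Sort*} (S : Set (GG).E) {p q : (GG).V} (h : (GG).Reach S p q)
    (c d : α) :
    (if (GG).Reach S (Sum.inr b₁) p then c else d)
      = (if (GG).Reach S (Sum.inr b₁) q then c else d) := by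
  by_cases hcase : (GG).Reach S (Sum.inr b₁) p
  · rw [if_pos hcase,
      if_pos (show (GG).Reach S (Sum.inr b₁) q from hcase.trans h)]
  · rw [if_neg hcase,
      if_neg (show ¬ (GG).Reach S (Sum.inr b₁) q from
        fun hq => hcase (hq.trans (reach_symm _ _ h)))]

lemma proj1_b1 (S : Set (GG).E) : π₁ S (Sum.inr b₁) = a₁ := by
  simp only [gProj1]
  rw [if_pos (show (GG).Reach S (Sum.inr b₁) (Sum.inr b₁) from Relation.ReflTransGen.refl)]

lemma proj1_b2 (S : Set (GG).E) (hsep : ¬ (GG).Reach S (Sum.inr b₁) (Sum.inr b₂)) :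
    π₁ S (Sum.inr b₂) = a₂ := by
  simp only [gProj1]; rw [if_neg hsep]

lemma proj1_iota (S : Set (GG).E) (hne : a₂ ≠ a₁)
    (hsep : ¬ (GG).Reach S (Sum.inr b₁) (Sum.inr b₂)) (u : L₁.V) :
    π₁ S (ι' u) = u := by
  by_cases h₁ : u = a₁
  · rw [h₁, iota_a1, proj1_b1]
  · by_cases h₂ : u = a₂
    · rw [h₂, iota_a2 L₁ L₂ a₁ a₂ b₁ b₂ hne, proj1_b2 L₁ L₂ a₁ a₂ b₁ b₂ _ hsep]
    · rw [iota_other L₁ L₂ a₁ a₂ b₁ b₂ u h₁ h₂]; rfl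

open Classical in
lemma proj2_iota (S : Set (GG).E) (hne : a₂ ≠ a₁)
    (hsep : ¬ (GG).Reach S (Sum.inr b₁) (Sum.inr b₂)) (u : L₁.V) :
    π₂ S (ι' u) = if (GG).Reach S (Sum.inr b₁) (ι' u) then b₁ else b₂ := by
  by_cases h₁ : u = a₁
  · rw [h₁, iota_a1]
    show b₁ = _
    rw [if_pos (show (GG).Reach S (Sum.inr b₁) (Sum.inr b₁) from Relation.ReflTransGen.refl)]
  · by_cases h₂ : u = a₂
    · rw [h₂, iota_a2 L₁ L₂ a₁ a₂ b₁ b₂ hne]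
      show b₂ = _
      rw [if_neg hsep]
    · rw [iota_other L₁ L₂ a₁ a₂ b₁ b₂ u h₁ h₂]; rfl

lemma proj1_step (S T : Set (GG).E) (hTS : T ⊆ S) (hne : a₂ ≠ a₁)
    (hsep : ¬ (GG).Reach S (Sum.inr b₁) (Sum.inr b₂)) {p q : (GG).V}
    (h : ∃ e ∈ T, (GG).ends e = s(p, q)) :
    L₁.Reach (Sum.inl ⁻¹' T) (π₁ S p) (π₁ S q) := by
  obtain ⟨e, heT, hends⟩ := h
  cases e with
  | inl e =>
      obtain ⟨u, v, huv⟩ := gExists_pair (L₁.ends e)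
      have hmap : s(ι' u, ι' v) = s(p, q) := by
        rw [← Sym2.map_pair_eq, ← huv]; exact hends
      have hmem : e ∈ Sum.inl ⁻¹' T := heT
      rcases Sym2.eq_iff.mp hmap with ⟨hu, hv⟩ | ⟨hu, hv⟩
      · rw [← hu, ← hv, proj1_iota L₁ L₂ a₁ a₂ b₁ b₂ S hne hsep,
          proj1_iota L₁ L₂ a₁ a₂ b₁ b₂ S hne hsep]
        exact reach_single _ hmem huv
      · rw [← hu, ← hv, proj1_iota L₁ L₂ a₁ a₂ b₁ b₂ S hne hsep,
          proj1_iota L₁ L₂ a₁ a₂ b₁ b₂ S hne hsep]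
        exact reach_symm _ _ (reach_single _ hmem huv)
  | inr e =>
      obtain ⟨u, v, huv⟩ := gExists_pair (L₂.ends e)
      have hmap : s((Sum.inr u : (GG).V), Sum.inr v) = s(p, q) := by
        rw [← Sym2.map_pair_eq, ← huv]; exact hends
      have hpq : (GG).Reach S p q := reach_single _ (hTS heT) hends
      have : π₁ S p = π₁ S q := by
        rcases Sym2.eq_iff.mp hmap with ⟨hu, hv⟩ | ⟨hu, hv⟩
        · rw [← hu, ← hv]
          have h' : (GG).Reach S (Sum.inr u) (Sum.inr v) := by rw [hu, hv]; exact hpq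
          simp only [gProj1]
          exact reach_if_congr L₁ L₂ a₁ a₂ b₁ b₂ S h' a₁ a₂
        · rw [← hu, ← hv]
          have h' : (GG).Reach S (Sum.inr v) (Sum.inr u) := by rw [hu, hv]; exact hpq
          simp only [gProj1]
          exact reach_if_congr L₁ L₂ a₁ a₂ b₁ b₂ S h' a₁ a₂
      rw [this]
      exact Relation.ReflTransGen.refl

lemma proj2_step (S T : Set (GG).E) (hTS : T ⊆ S) (hne : a₂ ≠ a₁)
    (hsep : ¬ (GG).Reach S (Sum.inr b₁) (Sum.inr b₂)) {p q : (GG).V}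
    (h : ∃ e ∈ T, (GG).ends e = s(p, q)) :
    L₂.Reach (Sum.inr ⁻¹' T) (π₂ S p) (π₂ S q) := by
  obtain ⟨e, heT, hends⟩ := h
  cases e with
  | inr e =>
      obtain ⟨u, v, huv⟩ := gExists_pair (L₂.ends e)
      have hmap : s((Sum.inr u : (GG).V), Sum.inr v) = s(p, q) := by
        rw [← Sym2.map_pair_eq, ← huv]; exact hends
      have hmem : e ∈ Sum.inr ⁻¹' T := heT
      rcases Sym2.eq_iff.mp hmap with ⟨hu, hv⟩ | ⟨hu, hv⟩
      · rw [← hu, ← hv]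
        exact reach_single _ hmem huv
      · rw [← hu, ← hv]
        exact reach_symm _ _ (reach_single _ hmem huv)
  | inl e =>
      obtain ⟨u, v, huv⟩ := gExists_pair (L₁.ends e)
      have hmap : s(ι' u, ι' v) = s(p, q) := by
        rw [← Sym2.map_pair_eq, ← huv]; exact hends
      have hpq : (GG).Reach S p q := reach_single _ (hTS heT) hends
      have : π₂ S p = π₂ S q := by
        rcases Sym2.eq_iff.mp hmap with ⟨hu, hv⟩ | ⟨hu, hv⟩
        · rw [← hu, ← hv, proj2_iota L₁ L₂ a₁ a₂ b₁ b₂ S hne hsep,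
            proj2_iota L₁ L₂ a₁ a₂ b₁ b₂ S hne hsep]
          have h' : (GG).Reach S (ι' u) (ι' v) := by rw [hu, hv]; exact hpq
          exact reach_if_congr L₁ L₂ a₁ a₂ b₁ b₂ S h' b₁ b₂
        · rw [← hu, ← hv, proj2_iota L₁ L₂ a₁ a₂ b₁ b₂ S hne hsep,
            proj2_iota L₁ L₂ a₁ a₂ b₁ b₂ S hne hsep]
          have h' : (GG).Reach S (ι' v) (ι' u) := by rw [hu, hv]; exact hpq
          exact reach_if_congr L₁ L₂ a₁ a₂ b₁ b₂ S h' b₁ b₂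
      rw [this]
      exact Relation.ReflTransGen.refl

lemma proj1_reach (S T : Set (GG).E) (hTS : T ⊆ S) (hne : a₂ ≠ a₁)
    (hsep : ¬ (GG).Reach S (Sum.inr b₁) (Sum.inr b₂)) {x y : (GG).V}
    (h : (GG).Reach T x y) :
    L₁.Reach (Sum.inl ⁻¹' T) (π₁ S x) (π₁ S y) :=
  reach_hom _ (fun _ _ hs => proj1_step L₁ L₂ a₁ a₂ b₁ b₂ S T hTS hne hsep hs) h

lemma proj2_reach (S T : Set (GG).E) (hTS : T ⊆ S) (hne : a₂ ≠ a₁)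
    (hsep : ¬ (GG).Reach S (Sum.inr b₁) (Sum.inr b₂)) {x y : (GG).V}
    (h : (GG).Reach T x y) :
    L₂.Reach (Sum.inr ⁻¹' T) (π₂ S x) (π₂ S y) :=
  reach_hom _ (fun _ _ hs => proj2_step L₁ L₂ a₁ a₂ b₁ b₂ S T hTS hne hsep hs) h

lemma reach_lift1 (S₁ : Set L₁.E) (T : Set (GG).E) (hT : ∀ e ∈ S₁, Sum.inl e ∈ T)
    {x y : L₁.V} (h : L₁.Reach S₁ x y) : (GG).Reach T (ι' x) (ι' y) :=
  reach_hom _ (fun u v ⟨e, he, huv⟩ => reach_single _ (hT e he)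
    (by rw [gEnds_inl, huv, Sym2.map_pair_eq])) h

lemma reach_lift2 (S₂ : Set L₂.E) (T : Set (GG).E) (hT : ∀ e ∈ S₂, Sum.inr e ∈ T)
    {x y : L₂.V} (h : L₂.Reach S₂ x y) : (GG).Reach T (Sum.inr x) (Sum.inr y) :=
  reach_hom _ (fun u v ⟨e, he, huv⟩ => reach_single _ (hT e he)
    (by rw [gEnds_inr, huv, Sym2.map_pair_eq]; rfl)) h

lemma glue_key (ha : a₁ ≠ a₂) (S : Finset (GG).E) :
    (GG).IsTwoForest (Sum.inr b₁) (Sum.inr b₂) S ↔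
      L₁.IsTwoForest a₁ a₂ (S.preimage Sum.inl Sum.inl_injective.injOn) ∧
      L₂.IsTwoForest b₁ b₂ (S.preimage Sum.inr Sum.inr_injective.injOn) := by
  have hne : a₂ ≠ a₁ := ha.symm
  set S₁ : Finset L₁.E := S.preimage Sum.inl Sum.inl_injective.injOn with hS₁
  set S₂ : Finset L₂.E := S.preimage Sum.inr Sum.inr_injective.injOn with hS₂
  have hmem1 : ∀ e : L₁.E, e ∈ S₁ ↔ Sum.inl e ∈ S := fun e => Finset.mem_preimage
  have hco1 : (↑S₁ : Set L₁.E) = Sum.inl ⁻¹' (↑S : Set (GG).E) :=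
    Finset.coe_preimage _ _
  have hco2 : (↑S₂ : Set L₂.E) = Sum.inr ⁻¹' (↑S : Set (GG).E) :=
    Finset.coe_preimage _ _
  have hmem2 : ∀ e : L₂.E, e ∈ S₂ ↔ Sum.inr e ∈ S := fun e => Finset.mem_preimage
  constructor
  · rintro ⟨hfor, hsep, hspan⟩
    refine ⟨⟨?_, ?_, ?_⟩, ?_, ?_, ?_⟩
    · -- forest in L₁
      intro e he x y hxy hreach
      have hlift : (GG).Reach ((↑S : Set (GG).E) \ {Sum.inl e}) (ι' x) (ι' y) := by
        refine reach_lift1 L₁ L₂ a₁ a₂ b₁ b₂ _ _ ?_ hreach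
        rintro e' ⟨he'₁, he'₂⟩
        refine ⟨(hmem1 e').mp he'₁, fun hc => he'₂ ?_⟩
        exact Set.mem_singleton_iff.mpr
          (Sum.inl_injective (Set.mem_singleton_iff.mp hc))
      exact hfor (Sum.inl e) ((hmem1 e).mp he) (ι' x) (ι' y)
        (by rw [gEnds_inl, hxy, Sym2.map_pair_eq]) hlift
    · -- separation in L₁
      intro hr
      have := reach_lift1 L₁ L₂ a₁ a₂ b₁ b₂ (↑S₁) (↑S) (fun e' he' => (hmem1 e').mp he') hr
      rw [iota_a1, iota_a2 L₁ L₂ a₁ a₂ b₁ b₂ hne] at this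
      exact hsep this
    · -- spanning in L₁
      intro x
      rcases hspan (ι' x) with h | h
      · left
        have := proj1_reach L₁ L₂ a₁ a₂ b₁ b₂ (↑S) (↑S) Set.Subset.rfl hne hsep h
        rwa [proj1_b1, proj1_iota L₁ L₂ a₁ a₂ b₁ b₂ _ hne hsep, ← hco1] at this
      · right
        have := proj1_reach L₁ L₂ a₁ a₂ b₁ b₂ (↑S) (↑S) Set.Subset.rfl hne hsep h
        rwa [proj1_b2 L₁ L₂ a₁ a₂ b₁ b₂ _ hsep, proj1_iota L₁ L₂ a₁ a₂ b₁ b₂ _ hne hsep,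
          ← hco1] at this
    · -- forest in L₂
      intro e he x y hxy hreach
      have hlift : (GG).Reach ((↑S : Set (GG).E) \ {Sum.inr e}) (Sum.inr x) (Sum.inr y) := by
        refine reach_lift2 L₁ L₂ a₁ a₂ b₁ b₂ _ _ ?_ hreach
        rintro e' ⟨he'₁, he'₂⟩
        refine ⟨(hmem2 e').mp he'₁, fun hc => he'₂ ?_⟩
        exact Set.mem_singleton_iff.mpr
          (Sum.inr_injective (Set.mem_singleton_iff.mp hc))
      exact hfor (Sum.inr e) ((hmem2 e).mp he) (Sum.inr x) (Sum.inr y)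
        (by rw [gEnds_inr, hxy, Sym2.map_pair_eq]; rfl) hlift
    · -- separation in L₂
      intro hr
      exact hsep (reach_lift2 L₁ L₂ a₁ a₂ b₁ b₂ (↑S₂) (↑S) (fun e' he' => (hmem2 e').mp he') hr)
    · -- spanning in L₂
      intro y
      rcases hspan (Sum.inr y) with h | h
      · left
        have := proj2_reach L₁ L₂ a₁ a₂ b₁ b₂ (↑S) (↑S) Set.Subset.rfl hne hsep h
        rwa [← hco2] at this
      · right
        have := proj2_reach L₁ L₂ a₁ a₂ b₁ b₂ (↑S) (↑S) Set.Subset.rfl hne hsep h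
        rwa [← hco2] at this
  · rintro ⟨⟨hfor1, hsep1, hspan1⟩, ⟨hfor2, hsep2, hspan2⟩⟩
    have hsepG : ¬ (GG).Reach (↑S) (Sum.inr b₁) (Sum.inr b₂) := by
      intro hr
      let C : (GG).V → Prop := fun w =>
        Sum.elim (fun x => L₁.Reach (↑S₁) a₁ x.1) (fun y => L₂.Reach (↑S₂) b₁ y) w
      have hCiota : ∀ u : L₁.V, C (ι' u) ↔ L₁.Reach (↑S₁) a₁ u := by
        intro u
        by_cases h₁ : u = a₁
        · rw [h₁, iota_a1]
          exact iff_of_true Relation.ReflTransGen.refl Relation.ReflTransGen.refl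
        · by_cases h₂ : u = a₂
          · rw [h₂, iota_a2 L₁ L₂ a₁ a₂ b₁ b₂ hne]
            exact iff_of_false hsep2 hsep1
          · rw [iota_other L₁ L₂ a₁ a₂ b₁ b₂ u h₁ h₂]; exact Iff.rfl
      have hstepC : ∀ p q : (GG).V, (∃ e ∈ (↑S : Set (GG).E), (GG).ends e = s(p, q)) →
          (C p ↔ C q) := by
        rintro p q ⟨e, he, hends⟩
        cases e with
        | inl e =>
            obtain ⟨u, v, huv⟩ := gExists_pair (L₁.ends e)
            have hmap : s(ι' u, ι' v) = s(p, q) := by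
              rw [← Sym2.map_pair_eq, ← huv]; exact hends
            have hstep : L₁.Reach (↑S₁) u v :=
              reach_single _ (show e ∈ (↑S₁ : Set L₁.E) from (hmem1 e).mpr he) huv
            have hiff : L₁.Reach (↑S₁) a₁ u ↔ L₁.Reach (↑S₁) a₁ v :=
              ⟨fun h => h.trans hstep, fun h => h.trans (reach_symm _ _ hstep)⟩
            rcases Sym2.eq_iff.mp hmap with ⟨hu, hv⟩ | ⟨hu, hv⟩
            · rw [← hu, ← hv, hCiota, hCiota]; exact hiff
            · rw [← hu, ← hv, hCiota, hCiota]; exact hiff.symm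
        | inr e =>
            obtain ⟨u, v, huv⟩ := gExists_pair (L₂.ends e)
            have hmap : s((Sum.inr u : (GG).V), Sum.inr v) = s(p, q) := by
              rw [← Sym2.map_pair_eq, ← huv]; exact hends
            have hstep : L₂.Reach (↑S₂) u v :=
              reach_single _ (show e ∈ (↑S₂ : Set L₂.E) from (hmem2 e).mpr he) huv
            have hiff : L₂.Reach (↑S₂) b₁ u ↔ L₂.Reach (↑S₂) b₁ v :=
              ⟨fun h => h.trans hstep, fun h => h.trans (reach_symm _ _ hstep)⟩
            rcases Sym2.eq_iff.mp hmap with ⟨hu, hv⟩ | ⟨hu, hv⟩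
            · rw [← hu, ← hv]; exact hiff
            · rw [← hu, ← hv]; exact hiff.symm
      have hmono : ∀ w : (GG).V, (GG).Reach (↑S) (Sum.inr b₁) w → C w := by
        intro w hw
        induction hw with
        | refl => exact Relation.ReflTransGen.refl
        | tail _ hstep ih => exact (hstepC _ _ hstep).mp ih
      exact hsep2 (hmono _ hr)
    refine ⟨?_, hsepG, ?_⟩
    · -- forest in GG
      intro e he p q hends hreach
      cases e with
      | inl e =>
          have hreach' := proj1_reach L₁ L₂ a₁ a₂ b₁ b₂ (↑S) ((↑S : Set (GG).E) \ {Sum.inl e})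
            Set.diff_subset hne hsepG hreach
          have hTset : Sum.inl ⁻¹' ((↑S : Set (GG).E) \ {Sum.inl e})
              = (↑S₁ : Set L₁.E) \ {e} := by
            ext e'
            simp [hS₁, Set.mem_preimage, Set.mem_diff, Finset.coe_preimage]
            exact ⟨fun ⟨h1, h2⟩ => ⟨Finset.mem_preimage.mpr h1,
              fun h => h2 (Set.mem_singleton_iff.mpr (congrArg Sum.inl h))⟩,
              fun ⟨h1, h2⟩ => ⟨Finset.mem_preimage.mp h1,
              fun h => h2 (Sum.inl_injective (Set.mem_singleton_iff.mp h))⟩⟩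
          replace hreach' : L₁.Reach ((↑S₁ : Set L₁.E) \ {e}) (π₁ (↑S) p) (π₁ (↑S) q) := by
            rw [← hTset]; exact hreach'
          obtain ⟨u, v, huv⟩ := gExists_pair (L₁.ends e)
          have hmap : s(ι' u, ι' v) = s(p, q) := by
            rw [← Sym2.map_pair_eq, ← huv]; exact hends
          rcases Sym2.eq_iff.mp hmap with ⟨hu, hv⟩ | ⟨hu, hv⟩
          · rw [← hu, ← hv, proj1_iota L₁ L₂ a₁ a₂ b₁ b₂ _ hne hsepG,
              proj1_iota L₁ L₂ a₁ a₂ b₁ b₂ _ hne hsepG] at hreach'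
            exact hfor1 e ((hmem1 e).mpr he) u v huv hreach'
          · rw [← hu, ← hv, proj1_iota L₁ L₂ a₁ a₂ b₁ b₂ _ hne hsepG,
              proj1_iota L₁ L₂ a₁ a₂ b₁ b₂ _ hne hsepG] at hreach'
            exact hfor1 e ((hmem1 e).mpr he) u v huv (reach_symm _ _ hreach')
      | inr e =>
          have hreach' := proj2_reach L₁ L₂ a₁ a₂ b₁ b₂ (↑S) ((↑S : Set (GG).E) \ {Sum.inr e})
            Set.diff_subset hne hsepG hreach
          have hTset : Sum.inr ⁻¹' ((↑S : Set (GG).E) \ {Sum.inr e})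
              = (↑S₂ : Set L₂.E) \ {e} := by
            ext e'
            simp [hS₂, Set.mem_preimage, Set.mem_diff, Finset.coe_preimage]
            exact ⟨fun ⟨h1, h2⟩ => ⟨Finset.mem_preimage.mpr h1,
              fun h => h2 (Set.mem_singleton_iff.mpr (congrArg Sum.inr h))⟩,
              fun ⟨h1, h2⟩ => ⟨Finset.mem_preimage.mp h1,
              fun h => h2 (Sum.inr_injective (Set.mem_singleton_iff.mp h))⟩⟩
          replace hreach' : L₂.Reach ((↑S₂ : Set L₂.E) \ {e}) (π₂ (↑S) p) (π₂ (↑S) q) := by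
            rw [← hTset]; exact hreach'
          obtain ⟨u, v, huv⟩ := gExists_pair (L₂.ends e)
          have hmap : s((Sum.inr u : (GG).V), Sum.inr v) = s(p, q) := by
            rw [← Sym2.map_pair_eq, ← huv]; exact hends
          rcases Sym2.eq_iff.mp hmap with ⟨hu, hv⟩ | ⟨hu, hv⟩
          · rw [← hu, ← hv] at hreach'
            exact hfor2 e ((hmem2 e).mpr he) u v huv hreach'
          · rw [← hu, ← hv] at hreach'
            exact hfor2 e ((hmem2 e).mpr he) u v huv (reach_symm _ _ hreach')
    · -- spanning in GG
      intro w
      cases w with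
      | inl x =>
          have hx : ι' x.1 = Sum.inl x := by
            rw [iota_other L₁ L₂ a₁ a₂ b₁ b₂ x.1 x.2.1 x.2.2]
          rcases hspan1 x.1 with h | h
          · left
            have := reach_lift1 L₁ L₂ a₁ a₂ b₁ b₂ (↑S₁) (↑S) (fun e' he' => (hmem1 e').mp he') h
            rwa [iota_a1, hx] at this
          · right
            have := reach_lift1 L₁ L₂ a₁ a₂ b₁ b₂ (↑S₁) (↑S) (fun e' he' => (hmem1 e').mp he') h
            rwa [iota_a2 L₁ L₂ a₁ a₂ b₁ b₂ hne, hx] at this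
      | inr y =>
          rcases hspan2 y with h | h
          · left
            exact reach_lift2 L₁ L₂ a₁ a₂ b₁ b₂ (↑S₂) (↑S) (fun e' he' => (hmem2 e').mp he') h
          · right
            exact reach_lift2 L₁ L₂ a₁ a₂ b₁ b₂ (↑S₂) (↑S) (fun e' he' => (hmem2 e').mp he') h


lemma glue_pre1 [DecidableEq (L₁.E ⊕ L₂.E)] (A : Finset L₁.E) (B : Finset L₂.E) :
    (((A.map ⟨Sum.inl, Sum.inl_injective⟩ ∪ B.map ⟨Sum.inr, Sum.inr_injective⟩ :
      Finset (L₁.E ⊕ L₂.E)) : Finset (GG).E).preimage Sum.inl Sum.inl_injective.injOn) = A := by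
  ext e; simp

lemma glue_pre2 [DecidableEq (L₁.E ⊕ L₂.E)] (A : Finset L₁.E) (B : Finset L₂.E) :
    (((A.map ⟨Sum.inl, Sum.inl_injective⟩ ∪ B.map ⟨Sum.inr, Sum.inr_injective⟩ :
      Finset (L₁.E ⊕ L₂.E)) : Finset (GG).E).preimage Sum.inr Sum.inr_injective.injOn) = B := by
  ext e; simp

lemma glue_recon [DecidableEq (L₁.E ⊕ L₂.E)] (S : Finset (GG).E) :
    (S.preimage Sum.inl Sum.inl_injective.injOn).map ⟨Sum.inl, Sum.inl_injective⟩ ∪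
      (S.preimage Sum.inr Sum.inr_injective.injOn).map ⟨Sum.inr, Sum.inr_injective⟩ = S := by
  ext e; cases e <;> simp <;> exact Finset.mem_preimage

end Glue

end Multigraph

/-- If `L₁`, `L₂` are connected finite graphs with distinguished vertices `(a₁, a₂)` and
`(b₁, b₂)` respectively, and `L` is obtained by identifying `a₁` with `b₁` and `a₂` with
`b₂`, then `F₂(L) = F₂(L₁) · F₂(L₂)` for the numbers of spanning 2-forests separating
the distinguished pairs. -/
theorem stmt_10 (L₁ L₂ : Multigraph) (a₁ a₂ : L₁.V) (b₁ b₂ : L₂.V)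
    (ha : a₁ ≠ a₂) (hb : b₁ ≠ b₂) (h₁ : L₁.Connected) (h₂ : L₂.Connected) :
    (glue2 L₁ L₂ a₁ a₂ b₁ b₂).twoForestCount (Sum.inr b₁) (Sum.inr b₂) =
      L₁.twoForestCount a₁ a₂ * L₂.twoForestCount b₁ b₂ := by
  haveI : DecidableEq (L₁.E ⊕ L₂.E) := Classical.decEq _
  have key := Multigraph.glue_key L₁ L₂ a₁ a₂ b₁ b₂ ha
  let E :
      {S : Finset (glue2 L₁ L₂ a₁ a₂ b₁ b₂).E //
        (glue2 L₁ L₂ a₁ a₂ b₁ b₂).IsTwoForest (Sum.inr b₁) (Sum.inr b₂) S} ≃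
      {S : Finset L₁.E // L₁.IsTwoForest a₁ a₂ S} ×
      {S : Finset L₂.E // L₂.IsTwoForest b₁ b₂ S} :=
  { toFun := fun S =>
      (⟨_, ((key S.1).mp S.2).1⟩, ⟨_, ((key S.1).mp S.2).2⟩)
    invFun := fun p =>
      ⟨(p.1.1.map ⟨Sum.inl, Sum.inl_injective⟩ ∪ p.2.1.map ⟨Sum.inr, Sum.inr_injective⟩ :
          Finset (L₁.E ⊕ L₂.E)),
        (key _).mpr
          ⟨Eq.mpr (congrArg (L₁.IsTwoForest a₁ a₂)
              (Multigraph.glue_pre1 L₁ L₂ p.1.1 p.2.1)) p.1.2,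
           Eq.mpr (congrArg (L₂.IsTwoForest b₁ b₂)
              (Multigraph.glue_pre2 L₁ L₂ p.1.1 p.2.1)) p.2.2⟩⟩
    left_inv := fun S => by
      apply Subtype.ext
      exact Multigraph.glue_recon L₁ L₂ a₁ a₂ b₁ b₂ S.1
    right_inv := fun p => by
      refine Prod.ext (Subtype.ext ?_) (Subtype.ext ?_)
      · exact Multigraph.glue_pre1 L₁ L₂ p.1.1 p.2.1
      · exact Multigraph.glue_pre2 L₁ L₂ p.1.1 p.2.1 }
  simp only [Multigraph.twoForestCount]
  rw [Nat.card_congr E, Nat.card_prod]
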